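/- Suppose Σ_{γ: r(γ) ≤ x} ⟨γ⟩^n = B_m e^x x^m + O(e^x x^{m-1}) when n = 2m, and the n-th power sums are O(e^x x^m) when n = 2m+1, and suppose each |⟨γ⟩| = O(r(γ)). Then the weighted sums Σ_{γ: r(γ)≤x} ⟨γ⟩^n / r(γ)^{n/2} = B_m e^x + O(e^x/x) for n = 2m, and are O(e^x x^{-1/2}) for n odd, as x → ∞. -/

import Mathlib

open Filter Asymptotics Real

open MeasureTheory

lemma contOn_rpow (c : ℝ) {s : Set ℝ} (hs : ∀ t ∈ s, (0:ℝ) < t) :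
    ContinuousOn (fun t : ℝ => t ^ c) s := fun t ht =>
  (Real.continuousAt_rpow_const t c (Or.inl (ne_of_gt (hs t ht)))).continuousWithinAt

lemma intble_exp_div {a b : ℝ} (ha : 1 ≤ a) (hb : 1 ≤ b) :
    IntervalIntegrable (fun t => Real.exp t / t) volume a b := by
  apply ContinuousOn.intervalIntegrable
  apply Real.continuous_exp.continuousOn.div continuousOn_id
  intro t ht
  rcases Set.mem_uIcc.1 ht with h | h
  · exact ne_of_gt (lt_of_lt_of_le one_pos (le_trans ha h.1))
  · exact ne_of_gt (lt_of_lt_of_le one_pos (le_trans hb h.1))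

lemma aux_int_exp_div {x : ℝ} (hx : 2 ≤ x) :
    ∫ t in (1:ℝ)..x, Real.exp t / t ≤ Real.exp 2 + 2 * (Real.exp x / x) := by
  have h1x : (1:ℝ) ≤ x := le_trans one_le_two hx
  have hsplit : (∫ t in (1:ℝ)..2, Real.exp t / t) + (∫ t in (2:ℝ)..x, Real.exp t / t)
      = ∫ t in (1:ℝ)..x, Real.exp t / t :=
    intervalIntegral.integral_add_adjacent_intervals (intble_exp_div le_rfl one_le_two)
      (intble_exp_div one_le_two h1x)
  have h12 : ∫ t in (1:ℝ)..2, Real.exp t / t ≤ Real.exp 2 := by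
    have : ∫ t in (1:ℝ)..2, Real.exp t / t ≤ ∫ t in (1:ℝ)..2, Real.exp 2 := by
      apply intervalIntegral.integral_mono_on one_le_two (intble_exp_div le_rfl one_le_two)
        intervalIntegrable_const
      intro t ht
      calc Real.exp t / t ≤ Real.exp t / 1 :=
            div_le_div_of_nonneg_left (Real.exp_pos t).le one_pos ht.1
        _ = Real.exp t := div_one _
        _ ≤ Real.exp 2 := Real.exp_le_exp.2 ht.2
    simpa using this.trans (by norm_num)
  have hderiv : ∀ t ∈ Set.uIcc (2:ℝ) x, HasDerivAt (fun t => Real.exp t / t)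
      ((Real.exp t * t - Real.exp t * 1) / t ^ 2) t := by
    intro t ht
    rw [Set.uIcc_of_le hx] at ht
    exact (Real.hasDerivAt_exp t).div (hasDerivAt_id t) (ne_of_gt (lt_of_lt_of_le two_pos ht.1))
  have hdint : IntervalIntegrable (fun t => (Real.exp t * t - Real.exp t * 1) / t ^ 2)
      volume 2 x := by
    apply ContinuousOn.intervalIntegrable
    apply ContinuousOn.div ((Real.continuous_exp.continuousOn.mul continuousOn_id).sub
      (Real.continuous_exp.continuousOn.mul continuousOn_const)) (continuousOn_pow 2)
    intro t ht
    rw [Set.uIcc_of_le hx] at ht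
    have : (0:ℝ) < t := lt_of_lt_of_le two_pos ht.1
    positivity
  have hftc : ∫ t in (2:ℝ)..x, (Real.exp t * t - Real.exp t * 1) / t ^ 2
      = Real.exp x / x - Real.exp 2 / 2 :=
    intervalIntegral.integral_eq_sub_of_hasDerivAt hderiv hdint
  have h2x : ∫ t in (2:ℝ)..x, Real.exp t / t ≤ 2 * (Real.exp x / x) := by
    have hmono : ∫ t in (2:ℝ)..x, Real.exp t / t
        ≤ ∫ t in (2:ℝ)..x, 2 * ((Real.exp t * t - Real.exp t * 1) / t ^ 2) := by
      apply intervalIntegral.integral_mono_on hx (intble_exp_div one_le_two h1x)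
        (hdint.const_mul 2)
      intro t ht
      have ht0 : (0:ℝ) < t := lt_of_lt_of_le two_pos ht.1
      have h2 : 2 ≤ t := ht.1
      have he : 0 < Real.exp t := Real.exp_pos t
      rw [mul_div_assoc', div_le_div_iff₀ ht0 (by positivity : (0:ℝ) < t^2)]
      nlinarith [mul_pos he ht0]
    have hnn : 0 ≤ Real.exp 2 / 2 := by positivity
    calc ∫ t in (2:ℝ)..x, Real.exp t / t ≤ 2 * (Real.exp x / x - Real.exp 2 / 2) := by
          rw [intervalIntegral.integral_const_mul, hftc] at hmono; linarith
      _ ≤ 2 * (Real.exp x / x) := by nlinarith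
  linarith [hsplit]

lemma aux_eq {Γ : Type*} (r f : Γ → ℝ) (hfin : ∀ x : ℝ, {γ : Γ | r γ ≤ x}.Finite)
    (k : ℝ) {x t : ℝ} (htx : t ≤ x) :
    t ^ (-(k+1)) * ∑ γ ∈ ((hfin t).toFinset.filter fun γ => 1 < r γ), f γ
      = ∑ γ ∈ ((hfin x).toFinset.filter fun γ => 1 < r γ),
          Set.indicator (Set.Ici (r γ)) (fun s => s ^ (-(k+1)) * f γ) t := by
  classical
  have hfilt : (hfin t).toFinset.filter (fun γ => 1 < r γ)
      = ((hfin x).toFinset.filter fun γ => 1 < r γ).filter (fun γ => r γ ≤ t) := by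
    ext γ
    simp only [Finset.mem_filter, Set.Finite.mem_toFinset, Set.mem_setOf_eq]
    constructor
    · rintro ⟨h1, h2⟩; exact ⟨⟨h1.trans htx, h2⟩, h1⟩
    · rintro ⟨⟨_, h2⟩, h3⟩; exact ⟨h3, h2⟩
  rw [hfilt, Finset.sum_filter, Finset.mul_sum]
  refine Finset.sum_congr rfl fun γ _ => ?_
  rw [Set.indicator_apply]
  simp only [Set.mem_Ici, mul_ite, mul_zero]

lemma aux_G_intble {Γ : Type*} (r f : Γ → ℝ)
    (hfin : ∀ x : ℝ, {γ : Γ | r γ ≤ x}.Finite) (k : ℝ) {x : ℝ} (hx : 1 ≤ x) :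
    IntervalIntegrable
      (fun t => t ^ (-(k+1)) * ∑ γ ∈ ((hfin t).toFinset.filter fun γ => 1 < r γ), f γ)
      volume 1 x := by
  rw [intervalIntegrable_iff_integrableOn_Ioc_of_le hx]
  have hint : IntegrableOn
      (fun t => ∑ γ ∈ ((hfin x).toFinset.filter fun γ => 1 < r γ),
        Set.indicator (Set.Ici (r γ)) (fun s => s ^ (-(k+1)) * f γ) t)
      (Set.Ioc 1 x) volume := by
    apply MeasureTheory.integrable_finset_sum
    intro γ _
    apply MeasureTheory.Integrable.indicator _ measurableSet_Ici
    have : IntegrableOn (fun s : ℝ => s ^ (-(k+1)) * f γ) (Set.Icc 1 x) volume := by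
      apply ContinuousOn.integrableOn_Icc
      exact (contOn_rpow _ (fun s hs => lt_of_lt_of_le one_pos hs.1)).mul continuousOn_const
    exact this.mono_set Set.Ioc_subset_Icc_self
  exact hint.congr_fun (fun t ht => (aux_eq r f hfin k ht.2).symm) measurableSet_Ioc

lemma aux_abel {Γ : Type*} (r f : Γ → ℝ) (hrpos : ∀ γ, 0 < r γ)
    (hfin : ∀ x : ℝ, {γ : Γ | r γ ≤ x}.Finite) (k : ℝ) (hk : 0 < k)
    {x : ℝ} (hx : 1 ≤ x) :
    ∑ γ ∈ ((hfin x).toFinset.filter fun γ => 1 < r γ), f γ * r γ ^ (-k)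
      = x ^ (-k) * (∑ γ ∈ ((hfin x).toFinset.filter fun γ => 1 < r γ), f γ)
        + k * ∫ t in (1:ℝ)..x,
            t ^ (-(k+1)) * ∑ γ ∈ ((hfin t).toFinset.filter fun γ => 1 < r γ), f γ := by
  classical
  have hEq : Set.EqOn
      (fun t => t ^ (-(k+1)) * ∑ γ ∈ ((hfin t).toFinset.filter fun γ => 1 < r γ), f γ)
      (fun t => ∑ γ ∈ ((hfin x).toFinset.filter fun γ => 1 < r γ),
          Set.indicator (Set.Ici (r γ)) (fun s => s ^ (-(k+1)) * f γ) t)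
      (Set.uIcc 1 x) := by
    intro t ht
    rw [Set.uIcc_of_le hx] at ht
    exact aux_eq r f hfin k ht.2
  rw [intervalIntegral.integral_congr hEq]
  rw [intervalIntegral.integral_finset_sum]
  swap
  · intro γ _
    rw [intervalIntegrable_iff_integrableOn_Ioc_of_le hx]
    apply MeasureTheory.Integrable.indicator _ measurableSet_Ici
    have : IntegrableOn (fun s : ℝ => s ^ (-(k+1)) * f γ) (Set.Icc 1 x) volume := by
      apply ContinuousOn.integrableOn_Icc
      exact (contOn_rpow _ (fun s hs => lt_of_lt_of_le one_pos hs.1)).mul continuousOn_const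
    exact this.mono_set Set.Ioc_subset_Icc_self
  have hterm : ∀ γ ∈ (hfin x).toFinset.filter fun γ => 1 < r γ,
      (∫ t in (1:ℝ)..x, Set.indicator (Set.Ici (r γ)) (fun s => s ^ (-(k+1)) * f γ) t)
        = f γ * ((x ^ (-k) - r γ ^ (-k)) / (-k)) := by
    intro γ hγ
    have hmem := Finset.mem_filter.1 hγ
    have h1γ : 1 < r γ := hmem.2
    have hγx : r γ ≤ x := by
      have := (Set.Finite.mem_toFinset _).1 hmem.1; exact this
    rw [intervalIntegral.integral_of_le hx, MeasureTheory.setIntegral_indicator measurableSet_Ici]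
    have hset : Set.Ioc 1 x ∩ Set.Ici (r γ) = Set.Icc (r γ) x := by
      ext t
      simp only [Set.mem_inter_iff, Set.mem_Ioc, Set.mem_Ici, Set.mem_Icc]
      constructor
      · rintro ⟨⟨_, h2⟩, h3⟩; exact ⟨h3, h2⟩
      · rintro ⟨h1, h2⟩; exact ⟨⟨lt_of_lt_of_le h1γ h1, h2⟩, h1⟩
    rw [hset, MeasureTheory.integral_Icc_eq_integral_Ioc, ← intervalIntegral.integral_of_le hγx]
    rw [intervalIntegral.integral_mul_const]
    rw [integral_rpow (Or.inr ⟨by intro h; rw [neg_add_rev] at h; nlinarith,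
      by rw [Set.uIcc_of_le hγx]; intro h; exact absurd h.1 (by push_neg; positivity)⟩)]
    rw [show -(k+1) + 1 = -k by ring]
    ring
  rw [Finset.sum_congr rfl hterm]
  rw [Finset.mul_sum, Finset.mul_sum, ← Finset.sum_add_distrib]
  refine Finset.sum_congr rfl fun γ _ => ?_
  have hk' : k ≠ 0 := ne_of_gt hk
  field_simp
  linear_combination

lemma aux_one_le_exp_div {x : ℝ} (hx : 1 ≤ x) : 1 ≤ Real.exp x / x := by
  have hx0 : 0 < x := lt_of_lt_of_le one_pos hx
  rw [le_div_iff₀ hx0, one_mul]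
  linarith [Real.add_one_le_exp x]

lemma aux_bigO_of_bdd {g : ℝ → ℝ} {c : ℝ} (h : ∀ x : ℝ, 1 ≤ x → |g x| ≤ c) :
    g =O[atTop] fun x => Real.exp x / x := by
  rw [Asymptotics.isBigO_iff]
  refine ⟨c, ?_⟩
  filter_upwards [eventually_ge_atTop (1:ℝ)] with x hx
  have hc : 0 ≤ c := le_trans (abs_nonneg _) (h 1 le_rfl)
  have h1 := aux_one_le_exp_div hx
  calc ‖g x‖ = |g x| := rfl
    _ ≤ c := h x hx
    _ ≤ c * (Real.exp x / x) := by nlinarith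
    _ ≤ c * ‖Real.exp x / x‖ := by
        rw [Real.norm_eq_abs, abs_of_nonneg (by positivity)]

lemma aux_integral_bigO {G : ℝ → ℝ}
    (hint : ∀ x : ℝ, 1 ≤ x → IntervalIntegrable G volume 1 x)
    {C x₀ : ℝ} (hG : ∀ t : ℝ, x₀ ≤ t → |G t| ≤ C * (Real.exp t / t)) :
    (fun x => ∫ t in (1:ℝ)..x, G t) =O[atTop] fun x => Real.exp x / x := by
  set x₁ := max x₀ 2 with hx₁def
  have hx₁2 : (2:ℝ) ≤ x₁ := le_max_right _ _
  have hx₁1 : (1:ℝ) ≤ x₁ := le_trans one_le_two hx₁2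
  have hC : 0 ≤ C := by
    have h := hG x₁ (le_max_left _ _)
    have hpos : 0 < Real.exp x₁ / x₁ := by positivity
    nlinarith [abs_nonneg (G x₁)]
  set M := |∫ t in (1:ℝ)..x₁, G t| with hM
  rw [Asymptotics.isBigO_iff]
  refine ⟨M + C * Real.exp 2 + 2 * C, ?_⟩
  filter_upwards [eventually_ge_atTop x₁] with x hx
  have h1x : (1:ℝ) ≤ x := le_trans hx₁1 hx
  have hIa : IntervalIntegrable G volume 1 x₁ := hint x₁ hx₁1
  have hIb : IntervalIntegrable G volume x₁ x := hIa.symm.trans (hint x h1x)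
  have hsplit : (∫ t in (1:ℝ)..x₁, G t) + ∫ t in x₁..x, G t = ∫ t in (1:ℝ)..x, G t :=
    intervalIntegral.integral_add_adjacent_intervals hIa hIb
  have hexp : IntervalIntegrable (fun t => C * (Real.exp t / t)) volume x₁ x :=
    (intble_exp_div hx₁1 h1x).const_mul C
  have habs : |∫ t in x₁..x, G t| ≤ ∫ t in x₁..x, |G t| :=
    intervalIntegral.abs_integral_le_integral_abs hx
  have hmono : ∫ t in x₁..x, |G t| ≤ ∫ t in x₁..x, C * (Real.exp t / t) :=
    intervalIntegral.integral_mono_on hx hIb.abs hexp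
      (fun t ht => hG t (le_trans (le_max_left _ _) ht.1))
  have hcmp : ∫ t in x₁..x, C * (Real.exp t / t) ≤ C * (Real.exp 2 + 2 * (Real.exp x / x)) := by
    rw [intervalIntegral.integral_const_mul]
    have hnn : 0 ≤ ∫ t in (1:ℝ)..x₁, Real.exp t / t := by
      apply intervalIntegral.integral_nonneg hx₁1
      intro t ht
      have : 0 < t := lt_of_lt_of_le one_pos ht.1
      positivity
    have hadd : (∫ t in (1:ℝ)..x₁, Real.exp t / t) + ∫ t in x₁..x, Real.exp t / t
        = ∫ t in (1:ℝ)..x, Real.exp t / t :=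
      intervalIntegral.integral_add_adjacent_intervals (intble_exp_div le_rfl hx₁1)
        (intble_exp_div hx₁1 h1x)
    have := aux_int_exp_div (le_trans hx₁2 hx)
    nlinarith
  have hed : 1 ≤ Real.exp x / x := aux_one_le_exp_div h1x
  have hkey : |∫ t in (1:ℝ)..x, G t| ≤ M + C * Real.exp 2 + 2 * C * (Real.exp x / x) := by
    rw [← hsplit]
    calc |(∫ t in (1:ℝ)..x₁, G t) + ∫ t in x₁..x, G t|
        ≤ M + |∫ t in x₁..x, G t| := abs_add_le _ _
      _ ≤ M + C * (Real.exp 2 + 2 * (Real.exp x / x)) := by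
          linarith [habs.trans (hmono.trans hcmp)]
      _ = M + C * Real.exp 2 + 2 * C * (Real.exp x / x) := by ring
  have hMnn : 0 ≤ M := abs_nonneg _
  calc ‖∫ t in (1:ℝ)..x, G t‖ = |∫ t in (1:ℝ)..x, G t| := rfl
    _ ≤ M + C * Real.exp 2 + 2 * C * (Real.exp x / x) := hkey
    _ ≤ (M + C * Real.exp 2 + 2 * C) * (Real.exp x / x) := by
        have h2 : 0 ≤ C * Real.exp 2 := by positivity
        nlinarith
    _ = (M + C * Real.exp 2 + 2 * C) * ‖Real.exp x / x‖ := by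
        rw [Real.norm_eq_abs, abs_of_nonneg (by positivity)]

lemma aux_master {Γ : Type*} (r f : Γ → ℝ) (hrpos : ∀ γ, 0 < r γ)
    (hfin : ∀ x : ℝ, {γ : Γ | r γ ≤ x}.Finite) {k D x₀ : ℝ} (hk : 0 < k)
    (hS : ∀ t : ℝ, x₀ ≤ t → |∑ γ ∈ (hfin t).toFinset, f γ| ≤ D * (Real.exp t * t ^ k)) :
    (fun x => (∑ γ ∈ (hfin x).toFinset, f γ * r γ ^ (-k))
        - x ^ (-k) * ∑ γ ∈ (hfin x).toFinset, f γ) =O[atTop] fun x => Real.exp x / x := by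
  classical
  set S₁ : ℝ := ∑ γ ∈ (hfin 1).toFinset, f γ with hS₁
  set A : ℝ := ∑ γ ∈ (hfin 1).toFinset, f γ * r γ ^ (-k) with hA
  -- splitting of full sums for x ≥ 1
  have hsplit : ∀ (g : Γ → ℝ) (x : ℝ), 1 ≤ x →
      ∑ γ ∈ (hfin x).toFinset, g γ
        = (∑ γ ∈ ((hfin x).toFinset.filter fun γ => 1 < r γ), g γ)
          + ∑ γ ∈ (hfin 1).toFinset, g γ := by
    intro g x hx
    have hnot : (hfin x).toFinset.filter (fun γ => ¬ 1 < r γ) = (hfin 1).toFinset := by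
      ext γ
      simp only [Finset.mem_filter, Set.Finite.mem_toFinset, Set.mem_setOf_eq, not_lt]
      constructor
      · rintro ⟨_, h2⟩; exact h2
      · intro h; exact ⟨h.trans hx, h⟩
    rw [← hnot, Finset.sum_filter_add_sum_filter_not]
  -- the bound for the integrand G
  set D' := |D| + |S₁| with hD'
  have hGbd : ∀ t : ℝ, max x₀ 1 ≤ t →
      |t ^ (-(k+1)) * ∑ γ ∈ ((hfin t).toFinset.filter fun γ => 1 < r γ), f γ|
        ≤ D' * (Real.exp t / t) := by
    intro t ht
    have ht1 : (1:ℝ) ≤ t := le_trans (le_max_right _ _) ht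
    have ht0 : (0:ℝ) < t := lt_of_lt_of_le one_pos ht1
    have habs1 : |t ^ (-(k+1))| = t ^ (-(k+1)) := abs_of_nonneg (Real.rpow_nonneg ht0.le _)
    have hfull : |∑ γ ∈ (hfin t).toFinset, f γ| ≤ |D| * (Real.exp t * t ^ k) := by
      refine (hS t (le_trans (le_max_left _ _) ht)).trans ?_
      have h0 : (0:ℝ) ≤ Real.exp t * t ^ k := by
        have := Real.rpow_nonneg ht0.le k
        positivity
      exact mul_le_mul_of_nonneg_right (le_abs_self D) h0
    have hfs : ∑ γ ∈ ((hfin t).toFinset.filter fun γ => 1 < r γ), f γ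
        = (∑ γ ∈ (hfin t).toFinset, f γ) - S₁ := by
      have := hsplit f t ht1; linarith
    have hfilter : |∑ γ ∈ ((hfin t).toFinset.filter fun γ => 1 < r γ), f γ|
        ≤ |D| * (Real.exp t * t ^ k) + |S₁| := by
      rw [hfs]
      refine (abs_sub _ _).trans ?_
      linarith
    have hr1 : t ^ (-(k+1)) * (|D| * (Real.exp t * t ^ k)) = |D| * (Real.exp t / t) := by
      rw [div_eq_mul_inv, ← Real.rpow_neg_one t]
      rw [show t ^ (-(k+1)) * (|D| * (Real.exp t * t ^ k))
        = |D| * (Real.exp t * (t ^ (-(k+1)) * t ^ k)) by ring, ← Real.rpow_add ht0]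
      norm_num
    have hr2 : t ^ (-(k+1)) ≤ Real.exp t / t := by
      have h1 : t ^ (-(k+1)) ≤ t ^ (-1:ℝ) :=
        Real.rpow_le_rpow_of_exponent_le ht1 (by linarith)
      have h2 : t ^ (-1:ℝ) = 1/t := by rw [Real.rpow_neg_one]; exact (one_div t).symm
      have h3 : 1/t ≤ Real.exp t / t := by
        gcongr
        linarith [Real.add_one_le_exp t]
      linarith [h2 ▸ h1]
    rw [abs_mul, habs1]
    calc t ^ (-(k+1)) * |∑ γ ∈ ((hfin t).toFinset.filter fun γ => 1 < r γ), f γ|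
        ≤ t ^ (-(k+1)) * (|D| * (Real.exp t * t ^ k) + |S₁|) :=
          mul_le_mul_of_nonneg_left hfilter (Real.rpow_nonneg ht0.le _)
      _ = |D| * (Real.exp t / t) + |S₁| * t ^ (-(k+1)) := by rw [mul_add, hr1]; ring
      _ ≤ |D| * (Real.exp t / t) + |S₁| * (Real.exp t / t) := by
          have := mul_le_mul_of_nonneg_left hr2 (abs_nonneg S₁)
          linarith
      _ = D' * (Real.exp t / t) := by rw [hD']; ring
  have hGint : ∀ x : ℝ, 1 ≤ x → IntervalIntegrable
      (fun t => t ^ (-(k+1)) * ∑ γ ∈ ((hfin t).toFinset.filter fun γ => 1 < r γ), f γ)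
      volume 1 x := fun x hx => aux_G_intble r f hfin k hx
  have h2 : (fun x => k * ∫ t in (1:ℝ)..x,
      t ^ (-(k+1)) * ∑ γ ∈ ((hfin t).toFinset.filter fun γ => 1 < r γ), f γ)
      =O[atTop] fun x => Real.exp x / x :=
    (aux_integral_bigO hGint hGbd).const_mul_left k
  have h1 : (fun x : ℝ => A - x ^ (-k) * S₁) =O[atTop] fun x => Real.exp x / x := by
    apply aux_bigO_of_bdd (c := |A| + |S₁|)
    intro x hx
    have hx0 : (0:ℝ) < x := lt_of_lt_of_le one_pos hx
    have hxk : x ^ (-k) ≤ 1 := Real.rpow_le_one_of_one_le_of_nonpos hx (by linarith)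
    have hxk0 : 0 ≤ x ^ (-k) := Real.rpow_nonneg hx0.le _
    calc |A - x ^ (-k) * S₁| ≤ |A| + |x ^ (-k) * S₁| := abs_sub _ _
      _ = |A| + x ^ (-k) * |S₁| := by rw [abs_mul, abs_of_nonneg hxk0]
      _ ≤ |A| + |S₁| := by nlinarith [abs_nonneg S₁]
  refine (h1.add h2).congr' ?_ EventuallyEq.rfl
  filter_upwards [eventually_ge_atTop (1:ℝ)] with x hx
  show A - x ^ (-k) * S₁ + k * ∫ t in (1:ℝ)..x,
      t ^ (-(k+1)) * ∑ γ ∈ ((hfin t).toFinset.filter fun γ => 1 < r γ), f γ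
    = (∑ γ ∈ (hfin x).toFinset, f γ * r γ ^ (-k)) - x ^ (-k) * ∑ γ ∈ (hfin x).toFinset, f γ
  rw [hsplit (fun γ => f γ * r γ ^ (-k)) x hx, hsplit f x hx,
    aux_abel r f hrpos hfin k hk hx, hA, hS₁]
  ring

/-- partial summation: if the even power sums satisfy
`Σ_{r γ ≤ x} a γ^{2m} = B_m eˣ xᵐ + O(eˣ x^{m-1})`, the odd power sums are `O(eˣ xᵐ)`,
`|a γ| ≤ K·r γ`, and the counting function is `O(eˣ)`, then the weighted sums
`Σ_{r γ ≤ x} a γⁿ / r γ^{n/2}` equal `B_m eˣ + O(eˣ/x)` for `n = 2m`, and are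
`O(eˣ x^{-1/2})` for `n = 2m+1` odd. -/
theorem stmt_14 {Γ : Type*} (r : Γ → ℝ) (a : Γ → ℝ) (B : ℕ → ℝ) (K : ℝ)
    (hrpos : ∀ γ, 0 < r γ)
    (hfin : ∀ x : ℝ, {γ : Γ | r γ ≤ x}.Finite)
    (hcount : (fun x : ℝ => (Nat.card {γ : Γ | r γ ≤ x} : ℝ)) =O[atTop]
      fun x => Real.exp x)
    (hbound : ∀ γ, |a γ| ≤ K * r γ)
    (heven : ∀ m : ℕ,
      (fun x : ℝ => (∑ γ ∈ (hfin x).toFinset, a γ ^ (2 * m)) - B m * Real.exp x * x ^ m)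
        =O[atTop] fun x => Real.exp x * x ^ ((m : ℝ) - 1))
    (hodd : ∀ m : ℕ,
      (fun x : ℝ => ∑ γ ∈ (hfin x).toFinset, a γ ^ (2 * m + 1)) =O[atTop]
        fun x => Real.exp x * x ^ m) :
    (∀ m : ℕ,
      (fun x : ℝ => (∑ γ ∈ (hfin x).toFinset, a γ ^ (2 * m) / r γ ^ m) - B m * Real.exp x)
        =O[atTop] fun x => Real.exp x / x) ∧
    ∀ m : ℕ,
      (fun x : ℝ => ∑ γ ∈ (hfin x).toFinset, a γ ^ (2 * m + 1) / r γ ^ ((2 * m + 1 : ℝ) / 2))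
        =O[atTop] fun x => Real.exp x * x ^ (-(1 : ℝ) / 2) := by
  constructor
  · -- even case
    intro m
    rcases Nat.eq_zero_or_pos m with hm | hm
    · subst hm
      have hR : (fun x : ℝ => Real.exp x * x ^ (((0:ℕ) : ℝ) - 1)) =O[atTop]
          fun x => Real.exp x / x := by
        rw [Asymptotics.isBigO_iff]
        refine ⟨1, ?_⟩
        filter_upwards [eventually_ge_atTop (1:ℝ)] with x hx
        have hx0 : (0:ℝ) < x := lt_of_lt_of_le one_pos hx
        have : Real.exp x * x ^ (((0:ℕ) : ℝ) - 1) = Real.exp x / x := by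
          rw [Nat.cast_zero, zero_sub, Real.rpow_neg_one, div_eq_mul_inv]
        rw [this, one_mul]
      have h0 := (heven 0).trans hR
      refine h0.congr_left fun x => ?_
      simp
    · -- m ≥ 1
      have hk : (0:ℝ) < (m:ℝ) := by exact_mod_cast hm
      obtain ⟨C₀, hC₀⟩ := (heven m).bound
      rw [eventually_atTop] at hC₀
      obtain ⟨x₀', hx₀'⟩ := hC₀
      set x₀ := max x₀' 1 with hx₀def
      have hSbd : ∀ t : ℝ, x₀ ≤ t → |∑ γ ∈ (hfin t).toFinset, a γ ^ (2*m)|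
          ≤ (|C₀| + |B m|) * (Real.exp t * t ^ (m:ℝ)) := by
        intro t ht
        have ht1 : (1:ℝ) ≤ t := le_trans (le_max_right _ _) ht
        have ht0 : (0:ℝ) < t := lt_of_lt_of_le one_pos ht1
        have h1 := hx₀' t (le_trans (le_max_left _ _) ht)
        rw [Real.norm_eq_abs, Real.norm_eq_abs] at h1
        have h2 : |Real.exp t * t ^ ((m:ℝ) - 1)| = Real.exp t * t ^ ((m:ℝ) - 1) :=
          abs_of_nonneg (mul_nonneg (Real.exp_pos t).le (Real.rpow_nonneg ht0.le _))
        rw [h2] at h1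
        have h3 : t ^ ((m:ℝ) - 1) ≤ t ^ (m:ℝ) :=
          Real.rpow_le_rpow_of_exponent_le ht1 (by linarith)
        have h4 : |B m * Real.exp t * t ^ m| ≤ |B m| * (Real.exp t * t ^ (m:ℝ)) := by
          rw [abs_mul, abs_mul, abs_of_nonneg (Real.exp_pos t).le,
            abs_of_nonneg (pow_nonneg ht0.le m), ← Real.rpow_natCast t m]
          rw [mul_assoc]
        have he : (0:ℝ) ≤ Real.exp t := (Real.exp_pos t).le
        have hp : (0:ℝ) ≤ t ^ ((m:ℝ)-1) := Real.rpow_nonneg ht0.le _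
        have hXY : Real.exp t * t ^ ((m:ℝ)-1) ≤ Real.exp t * t ^ (m:ℝ) :=
          mul_le_mul_of_nonneg_left h3 he
        have h5 : C₀ * (Real.exp t * t ^ ((m:ℝ) - 1)) ≤ |C₀| * (Real.exp t * t ^ (m:ℝ)) :=
          le_trans (mul_le_mul_of_nonneg_right (le_abs_self C₀) (mul_nonneg he hp))
            (mul_le_mul_of_nonneg_left hXY (abs_nonneg C₀))
        calc |∑ γ ∈ (hfin t).toFinset, a γ ^ (2*m)|
            = |((∑ γ ∈ (hfin t).toFinset, a γ ^ (2*m)) - B m * Real.exp t * t ^ m)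
              + B m * Real.exp t * t ^ m| := by rw [sub_add_cancel]
          _ ≤ |(∑ γ ∈ (hfin t).toFinset, a γ ^ (2*m)) - B m * Real.exp t * t ^ m|
              + |B m * Real.exp t * t ^ m| := abs_add_le _ _
          _ ≤ C₀ * (Real.exp t * t ^ ((m:ℝ) - 1)) + |B m| * (Real.exp t * t ^ (m:ℝ)) := by
              linarith
          _ ≤ (|C₀| + |B m|) * (Real.exp t * t ^ (m:ℝ)) := by linarith
      have H1 := aux_master r (fun γ => a γ ^ (2*m)) hrpos hfin (k := (m:ℝ))
        (D := |C₀| + |B m|) (x₀ := x₀) hk hSbd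
      have H2 : (fun x => x ^ (-(m:ℝ)) * (∑ γ ∈ (hfin x).toFinset, a γ ^ (2*m))
          - B m * Real.exp x) =O[atTop] fun x => Real.exp x / x := by
        rw [Asymptotics.isBigO_iff]
        refine ⟨|C₀|, ?_⟩
        filter_upwards [eventually_ge_atTop x₀] with x hx
        have hx1 : (1:ℝ) ≤ x := le_trans (le_max_right _ _) hx
        have hx0 : (0:ℝ) < x := lt_of_lt_of_le one_pos hx1
        have e1 : x ^ (-(m:ℝ)) * (B m * Real.exp x * x ^ m) = B m * Real.exp x := by
          rw [← Real.rpow_natCast x m]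
          have : x ^ (-(m:ℝ)) * x ^ ((m:ℝ)) = 1 := by
            rw [← Real.rpow_add hx0]; norm_num
          calc x ^ (-(m:ℝ)) * (B m * Real.exp x * x ^ ((m:ℝ)))
              = B m * Real.exp x * (x ^ (-(m:ℝ)) * x ^ ((m:ℝ))) := by ring
            _ = B m * Real.exp x := by rw [this, mul_one]
        have h1 := hx₀' x (le_trans (le_max_left _ _) hx)
        rw [Real.norm_eq_abs, Real.norm_eq_abs] at h1
        have h2 : |Real.exp x * x ^ ((m:ℝ) - 1)| = Real.exp x * x ^ ((m:ℝ) - 1) :=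
          abs_of_nonneg (mul_nonneg (Real.exp_pos x).le (Real.rpow_nonneg hx0.le _))
        rw [h2] at h1
        have e2 : x ^ (-(m:ℝ)) * (Real.exp x * x ^ ((m:ℝ) - 1)) = Real.exp x / x := by
          rw [div_eq_mul_inv, ← Real.rpow_neg_one x]
          rw [show x ^ (-(m:ℝ)) * (Real.exp x * x ^ ((m:ℝ) - 1))
            = Real.exp x * (x ^ (-(m:ℝ)) * x ^ ((m:ℝ) - 1)) by ring, ← Real.rpow_add hx0,
            show -(m:ℝ) + ((m:ℝ) - 1) = (-1:ℝ) by ring]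
        have hxk0 : (0:ℝ) ≤ x ^ (-(m:ℝ)) := Real.rpow_nonneg hx0.le _
        calc ‖x ^ (-(m:ℝ)) * (∑ γ ∈ (hfin x).toFinset, a γ ^ (2*m)) - B m * Real.exp x‖
            = |x ^ (-(m:ℝ)) * ((∑ γ ∈ (hfin x).toFinset, a γ ^ (2*m))
                - B m * Real.exp x * x ^ m)| := by
              rw [Real.norm_eq_abs, mul_sub, e1]
          _ = x ^ (-(m:ℝ)) * |(∑ γ ∈ (hfin x).toFinset, a γ ^ (2*m))
                - B m * Real.exp x * x ^ m| := by
              rw [abs_mul, abs_of_nonneg hxk0]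
          _ ≤ x ^ (-(m:ℝ)) * (C₀ * (Real.exp x * x ^ ((m:ℝ) - 1))) :=
              mul_le_mul_of_nonneg_left h1 hxk0
          _ ≤ x ^ (-(m:ℝ)) * (|C₀| * (Real.exp x * x ^ ((m:ℝ) - 1))) := by
              have hp : (0:ℝ) ≤ Real.exp x * x ^ ((m:ℝ)-1) :=
                mul_nonneg (Real.exp_pos x).le (Real.rpow_nonneg hx0.le _)
              exact mul_le_mul_of_nonneg_left
                (mul_le_mul_of_nonneg_right (le_abs_self C₀) hp) hxk0
          _ = |C₀| * (Real.exp x / x) := by rw [← e2]; ring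
          _ = |C₀| * ‖Real.exp x / x‖ := by
              rw [Real.norm_eq_abs, abs_of_nonneg (div_nonneg (Real.exp_pos x).le hx0.le)]
      have hsum : ∀ x : ℝ, (∑ γ ∈ (hfin x).toFinset, a γ ^ (2*m) / r γ ^ m)
          = ∑ γ ∈ (hfin x).toFinset, a γ ^ (2*m) * r γ ^ (-(m:ℝ)) := by
        intro x
        refine Finset.sum_congr rfl fun γ _ => ?_
        rw [div_eq_mul_inv, ← Real.rpow_natCast (r γ) m, ← Real.rpow_neg (hrpos γ).le]
      have hfe : (fun x : ℝ => (∑ γ ∈ (hfin x).toFinset, a γ ^ (2*m) / r γ ^ m)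
          - B m * Real.exp x)
          = fun x => ((∑ γ ∈ (hfin x).toFinset, a γ ^ (2*m) * r γ ^ (-(m:ℝ)))
              - x ^ (-(m:ℝ)) * ∑ γ ∈ (hfin x).toFinset, a γ ^ (2*m))
            + (x ^ (-(m:ℝ)) * (∑ γ ∈ (hfin x).toFinset, a γ ^ (2*m)) - B m * Real.exp x) := by
        funext x
        rw [hsum x]; ring
      rw [hfe]
      exact H1.add H2
  · -- odd case
    intro m
    set k : ℝ := (2 * m + 1 : ℝ) / 2 with hkdef
    have hk : (0:ℝ) < k := by positivity
    obtain ⟨C₀, hC₀⟩ := (hodd m).bound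
    rw [eventually_atTop] at hC₀
    obtain ⟨x₀', hx₀'⟩ := hC₀
    set x₀ := max x₀' 1 with hx₀def
    have hSbd : ∀ t : ℝ, x₀ ≤ t → |∑ γ ∈ (hfin t).toFinset, a γ ^ (2*m+1)|
        ≤ |C₀| * (Real.exp t * t ^ k) := by
      intro t ht
      have ht1 : (1:ℝ) ≤ t := le_trans (le_max_right _ _) ht
      have ht0 : (0:ℝ) < t := lt_of_lt_of_le one_pos ht1
      have h1 := hx₀' t (le_trans (le_max_left _ _) ht)
      rw [Real.norm_eq_abs, Real.norm_eq_abs] at h1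
      have h2 : |Real.exp t * t ^ m| = Real.exp t * t ^ (m:ℝ) := by
        rw [abs_of_nonneg (by positivity), ← Real.rpow_natCast t m]
      rw [h2] at h1
      have h3 : t ^ (m:ℝ) ≤ t ^ k :=
        Real.rpow_le_rpow_of_exponent_le ht1 (by rw [hkdef]; push_cast; linarith)
      have he : (0:ℝ) ≤ Real.exp t := (Real.exp_pos t).le
      have hp : (0:ℝ) ≤ t ^ (m:ℝ) := Real.rpow_nonneg ht0.le _
      calc |∑ γ ∈ (hfin t).toFinset, a γ ^ (2*m+1)|
          ≤ C₀ * (Real.exp t * t ^ (m:ℝ)) := h1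
        _ ≤ |C₀| * (Real.exp t * t ^ (m:ℝ)) :=
            mul_le_mul_of_nonneg_right (le_abs_self C₀) (by positivity)
        _ ≤ |C₀| * (Real.exp t * t ^ k) := by
            have := mul_le_mul_of_nonneg_left h3 he
            exact mul_le_mul_of_nonneg_left this (abs_nonneg C₀)
    have H1 := aux_master r (fun γ => a γ ^ (2*m+1)) hrpos hfin (k := k)
      (D := |C₀|) (x₀ := x₀) hk hSbd
    have hcmp : (fun x : ℝ => Real.exp x / x) =O[atTop]
        fun x => Real.exp x * x ^ (-(1:ℝ)/2) := by
      rw [Asymptotics.isBigO_iff]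
      refine ⟨1, ?_⟩
      filter_upwards [eventually_ge_atTop (1:ℝ)] with x hx
      have hx0 : (0:ℝ) < x := lt_of_lt_of_le one_pos hx
      have h1 : Real.exp x / x = Real.exp x * x ^ (-1:ℝ) := by
        rw [Real.rpow_neg_one, div_eq_mul_inv]
      have h2 : x ^ (-1:ℝ) ≤ x ^ (-(1:ℝ)/2) :=
        Real.rpow_le_rpow_of_exponent_le hx (by norm_num)
      rw [Real.norm_eq_abs, Real.norm_eq_abs, abs_of_nonneg (by positivity),
        abs_of_nonneg (mul_nonneg (Real.exp_pos x).le (Real.rpow_nonneg hx0.le _))]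
      rw [h1, one_mul]
      exact mul_le_mul_of_nonneg_left h2 (Real.exp_pos x).le
    have H2 : (fun x => x ^ (-k) * (∑ γ ∈ (hfin x).toFinset, a γ ^ (2*m+1)))
        =O[atTop] fun x => Real.exp x * x ^ (-(1:ℝ)/2) := by
      rw [Asymptotics.isBigO_iff]
      refine ⟨|C₀|, ?_⟩
      filter_upwards [eventually_ge_atTop x₀] with x hx
      have hx1 : (1:ℝ) ≤ x := le_trans (le_max_right _ _) hx
      have hx0 : (0:ℝ) < x := lt_of_lt_of_le one_pos hx1
      have h1 := hx₀' x (le_trans (le_max_left _ _) hx)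
      rw [Real.norm_eq_abs, Real.norm_eq_abs] at h1
      have h2 : |Real.exp x * x ^ m| = Real.exp x * x ^ (m:ℝ) := by
        rw [abs_of_nonneg (by positivity), ← Real.rpow_natCast x m]
      rw [h2] at h1
      have hxk0 : (0:ℝ) ≤ x ^ (-k) := Real.rpow_nonneg hx0.le _
      have e2 : x ^ (-k) * (Real.exp x * x ^ (m:ℝ)) = Real.exp x * x ^ (-(1:ℝ)/2) := by
        rw [show x ^ (-k) * (Real.exp x * x ^ ((m:ℝ)))
          = Real.exp x * (x ^ (-k) * x ^ ((m:ℝ))) by ring, ← Real.rpow_add hx0]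
        congr 1
        rw [hkdef]; push_cast; ring_nf
      calc ‖x ^ (-k) * (∑ γ ∈ (hfin x).toFinset, a γ ^ (2*m+1))‖
          = x ^ (-k) * |∑ γ ∈ (hfin x).toFinset, a γ ^ (2*m+1)| := by
            rw [Real.norm_eq_abs, abs_mul, abs_of_nonneg hxk0]
        _ ≤ x ^ (-k) * (C₀ * (Real.exp x * x ^ (m:ℝ))) :=
            mul_le_mul_of_nonneg_left h1 hxk0
        _ ≤ x ^ (-k) * (|C₀| * (Real.exp x * x ^ (m:ℝ))) := by
            have hp : (0:ℝ) ≤ Real.exp x * x ^ (m:ℝ) :=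
              mul_nonneg (Real.exp_pos x).le (Real.rpow_nonneg hx0.le _)
            exact mul_le_mul_of_nonneg_left
              (mul_le_mul_of_nonneg_right (le_abs_self C₀) hp) hxk0
        _ = |C₀| * (Real.exp x * x ^ (-(1:ℝ)/2)) := by rw [← e2]; ring
        _ = |C₀| * ‖Real.exp x * x ^ (-(1:ℝ)/2)‖ := by
            rw [Real.norm_eq_abs,
              abs_of_nonneg (mul_nonneg (Real.exp_pos x).le (Real.rpow_nonneg hx0.le _))]
    have hsum : ∀ x : ℝ, (∑ γ ∈ (hfin x).toFinset, a γ ^ (2*m+1) / r γ ^ ((2 * m + 1 : ℝ) / 2))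
        = ∑ γ ∈ (hfin x).toFinset, a γ ^ (2*m+1) * r γ ^ (-k) := by
      intro x
      refine Finset.sum_congr rfl fun γ _ => ?_
      rw [hkdef, div_eq_mul_inv, ← Real.rpow_neg (hrpos γ).le]
    have hfe : (fun x : ℝ => ∑ γ ∈ (hfin x).toFinset, a γ ^ (2*m+1) / r γ ^ ((2 * m + 1 : ℝ) / 2))
        = fun x => ((∑ γ ∈ (hfin x).toFinset, a γ ^ (2*m+1) * r γ ^ (-k))
            - x ^ (-k) * ∑ γ ∈ (hfin x).toFinset, a γ ^ (2*m+1))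
          + x ^ (-k) * (∑ γ ∈ (hfin x).toFinset, a γ ^ (2*m+1)) := by
      funext x
      rw [hsum x]; ring
    rw [hfe]
    exact (H1.trans hcmp).add H2
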